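/- Let p be a prime and let w, w' ∈ ℤ_p be p-adic integers that are algebraically independent over ℤ. In ℤ_p ⊕ ℤ_p (the p-adic completion of the free abelian group ℤe ⊕ ℤf), let G = {x ∈ ℤ_p ⊕ ℤ_p : p^n x ∈ ℤ·(1,0) + ℤ·(0,1) + ℤ·(w·w', w) for some n ∈ ℕ} (the p-pure closure of the subgroup generated by e = (1,0), f = (0,1) and w(w'e + f) = (ww', w)), and let K = ℤ·(1,0). Then Hom(G, K) = 0 and every group homomorphism G → G/K is an integer multiple of the canonical projection π : G → G/K; in particular, 0 → K → G → G/K → 0 is a cellular exact sequence of abelian groups whose kernel K is infinite cyclic, with G of rank 3 and G/K of rank 2. -/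

import Mathlib

open TensorProduct

/-- A homomorphism of abelian groups `π : G → H` is a *cellular cover* over `H` if the induced
map `π_* : Hom(G,G) → Hom(G,H)`, `φ ↦ π ∘ φ`, is bijective. -/
def IsCellularCoverAb {G H : Type*} [AddCommGroup G] [AddCommGroup H] (π : G →+ H) : Prop :=
  Function.Bijective fun φ : G →+ G => π.comp φ

/-- The group `G = ⟨e, f, w(w'e + f)⟩_* ⊆ ℤ_p ⊕ ℤ_p`: all `x` with
`p^n x ∈ ℤ·(1,0) + ℤ·(0,1) + ℤ·(w·w', w)` for some `n`. -/
def bigG (p : ℕ) [Fact p.Prime] (w w' : ℤ_[p]) : Submodule ℤ (ℤ_[p] × ℤ_[p]) where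
  carrier := {x | ∃ n : ℕ, (p ^ n : ℤ) • x ∈ Submodule.span ℤ
      ({(1, 0), (0, 1), (w * w', w)} : Set (ℤ_[p] × ℤ_[p]))}
  zero_mem' := ⟨0, by simp⟩
  add_mem' := by
    rintro x y ⟨n, hn⟩ ⟨m, hm⟩
    refine ⟨n + m, ?_⟩
    have h : (p ^ (n + m) : ℤ) • (x + y)
        = (p ^ m : ℤ) • ((p ^ n : ℤ) • x) + (p ^ n : ℤ) • ((p ^ m : ℤ) • y) := by
      rw [smul_add, ← mul_smul, ← mul_smul, ← pow_add, ← pow_add, Nat.add_comm m n]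
    rw [h]
    exact Submodule.add_mem _ (Submodule.smul_mem _ _ hn) (Submodule.smul_mem _ _ hm)
  smul_mem' := by
    rintro c x ⟨n, hn⟩
    refine ⟨n, ?_⟩
    rw [smul_comm]
    exact Submodule.smul_mem _ _ hn

namespace Stmt7Aux

open MvPolynomial

variable {p : ℕ} [Fact p.Prime] {w w' : ℤ_[p]}

lemma indep5 (hind : AlgebraicIndependent ℤ ![w, w']) (c₀ c₁ c₂ c₃ c₄ : ℤ)
    (h : (c₀ : ℤ_[p]) + c₁ * w + c₂ * w ^ 2 + c₃ * (w * w') + c₄ * (w ^ 2 * w') = 0) :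
    c₀ = 0 ∧ c₁ = 0 ∧ c₂ = 0 ∧ c₃ = 0 ∧ c₄ = 0 := by
  have hinj : Function.Injective
      (MvPolynomial.aeval ![w, w'] : MvPolynomial (Fin 2) ℤ →ₐ[ℤ] ℤ_[p]) := hind
  have hP : (C c₀ + C c₁ * X 0 + C c₂ * X 0 ^ 2 + C c₃ * (X 0 * X 1)
      + C c₄ * (X 0 ^ 2 * X 1) : MvPolynomial (Fin 2) ℤ) = 0 := by
    apply hinj
    simpa [algebraMap_int_eq, eq_intCast] using h
  simp only [X, C_apply, pow_two, monomial_mul, C_mul_monomial, mul_one, one_mul] at hP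
  have h0 := congrArg (coeff 0) hP
  have h1 := congrArg (coeff (Finsupp.single 0 1)) hP
  have h2 := congrArg (coeff (Finsupp.single 0 1 + Finsupp.single 0 1)) hP
  have h3 := congrArg (coeff (Finsupp.single 0 1 + Finsupp.single 1 1)) hP
  have h4 := congrArg (coeff (Finsupp.single 0 1 + Finsupp.single 0 1 + Finsupp.single 1 1)) hP
  simp only [coeff_add, coeff_monomial, coeff_zero] at h0 h1 h2 h3 h4
  norm_num [Finsupp.ext_iff, Finsupp.single_apply, Fin.forall_fin_two] at h0 h1 h2 h3 h4
  exact ⟨h0, h1, h2, h3, h4⟩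

lemma int_dvd_of_padic_dvd {k : ℤ} {n : ℕ} (h : ((p : ℤ_[p])) ^ n ∣ (k : ℤ_[p])) :
    (p : ℤ) ^ n ∣ k := by
  rw [← PadicInt.norm_int_le_pow_iff_dvd, PadicInt.norm_le_pow_iff_mem_span_pow]
  exact Ideal.mem_span_singleton.mpr h

lemma eq_zero_of_forall_pow_dvd {z : ℤ_[p]} (h : ∀ n : ℕ, ((p : ℤ_[p])) ^ n ∣ z) : z = 0 := by
  have hp1 : (1 : ℝ) < p := by exact_mod_cast (Fact.out : p.Prime).one_lt
  have hb : ∀ n : ℕ, ‖z‖ ≤ ((p : ℝ)⁻¹) ^ n := by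
    intro n
    have := (PadicInt.norm_le_pow_iff_mem_span_pow z n).mpr
      (Ideal.mem_span_singleton.mpr (h n))
    rwa [zpow_neg, zpow_natCast, ← inv_pow] at this
  have hlim : Filter.Tendsto (fun n : ℕ => ((p : ℝ)⁻¹) ^ n) Filter.atTop (nhds 0) :=
    tendsto_pow_atTop_nhds_zero_of_lt_one (by positivity) (by
      rw [inv_lt_one_iff₀]; right; exact hp1)
  have : ‖z‖ ≤ 0 := ge_of_tendsto hlim (Filter.Eventually.of_forall hb)
  simpa using le_antisymm this (norm_nonneg z)

lemma span_repr {x : ℤ_[p] × ℤ_[p]}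
    (hx : x ∈ Submodule.span ℤ ({(1, 0), (0, 1), (w * w', w)} : Set (ℤ_[p] × ℤ_[p]))) :
    ∃ a b c : ℤ, x = a • ((1 : ℤ_[p]), (0 : ℤ_[p])) + b • ((0 : ℤ_[p]), (1 : ℤ_[p]))
      + c • (w * w', w) := by
  rw [Submodule.mem_span_insert] at hx
  obtain ⟨a, z, hz, rfl⟩ := hx
  rw [Submodule.mem_span_insert] at hz
  obtain ⟨b, z', hz', rfl⟩ := hz
  rw [Submodule.mem_span_singleton] at hz'
  obtain ⟨c, rfl⟩ := hz'
  exact ⟨a, b, c, by abel⟩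

lemma eMem : ((1 : ℤ_[p]), (0 : ℤ_[p])) ∈ bigG p w w' :=
  ⟨0, by rw [pow_zero, one_smul]; exact Submodule.subset_span (by simp)⟩

lemma fMem : ((0 : ℤ_[p]), (1 : ℤ_[p])) ∈ bigG p w w' :=
  ⟨0, by rw [pow_zero, one_smul]; exact Submodule.subset_span (by simp)⟩

lemma gMem : (w * w', w) ∈ bigG p w w' :=
  ⟨0, by rw [pow_zero, one_smul]; exact Submodule.subset_span (by simp)⟩

noncomputable def eG (p : ℕ) [Fact p.Prime] (w w' : ℤ_[p]) : ↥(bigG p w w') := ⟨(1, 0), eMem⟩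
noncomputable def fG (p : ℕ) [Fact p.Prime] (w w' : ℤ_[p]) : ↥(bigG p w w') := ⟨(0, 1), fMem⟩
noncomputable def gG (p : ℕ) [Fact p.Prime] (w w' : ℤ_[p]) : ↥(bigG p w w') := ⟨(w * w', w), gMem⟩

lemma memRepr (x : ↥(bigG p w w')) :
    ∃ (n : ℕ) (a b c : ℤ), (p ^ n : ℤ) • x = a • eG p w w' + b • fG p w w' + c • gG p w w' := by
  obtain ⟨n, hn⟩ := x.2
  obtain ⟨a, b, c, habc⟩ := span_repr hn
  exact ⟨n, a, b, c, Subtype.ext habc⟩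

lemma pn_ne_zero (n : ℕ) : (((p : ℤ) ^ n : ℤ) : ℤ_[p]) ≠ 0 := by
  have : (p : ℤ) ^ n ≠ 0 := pow_ne_zero _ (by exact_mod_cast (Fact.out : p.Prime).ne_zero)
  exact_mod_cast this

lemma extB (F₁ F₂ : ↥(bigG p w w') →+ ℤ_[p])
    (he : F₁ (eG p w w') = F₂ (eG p w w'))
    (hf : F₁ (fG p w w') = F₂ (fG p w w'))
    (hg : F₁ (gG p w w') = F₂ (gG p w w')) : F₁ = F₂ := by
  ext x
  obtain ⟨n, a, b, c, hx⟩ := memRepr x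
  have h1 := congrArg F₁ hx
  have h2 := congrArg F₂ hx
  simp only [map_zsmul, map_add] at h1 h2
  rw [he, hf, hg] at h1
  have h3 : (p ^ n : ℤ) • F₁ x = (p ^ n : ℤ) • F₂ x := h1.trans h2.symm
  rw [zsmul_eq_mul, zsmul_eq_mul] at h3
  exact mul_left_cancel₀ (pn_ne_zero n) h3

lemma keyA (F : ↥(bigG p w w') →+ ℤ_[p]) :
    F (gG p w w') = w * w' * F (eG p w w') + w * F (fG p w w') := by
  have hdvd : ∀ n : ℕ, ((p : ℤ_[p])) ^ n ∣
      (F (gG p w w') - w * w' * F (eG p w w') - w * F (fG p w w')) := by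
    intro n
    obtain ⟨t, ht⟩ : ((p : ℤ_[p])) ^ n ∣ (w * w' - ((w * w').appr n : ℤ_[p])) :=
      Ideal.mem_span_singleton.mp (PadicInt.appr_spec n (w * w'))
    obtain ⟨s, hs⟩ : ((p : ℤ_[p])) ^ n ∣ (w - (w.appr n : ℤ_[p])) :=
      Ideal.mem_span_singleton.mp (PadicInt.appr_spec n w)
    set a : ℤ := ((w * w').appr n : ℤ) with ha
    set b : ℤ := (w.appr n : ℤ) with hb
    have hyy : (p ^ n : ℤ) • ((t, s) : ℤ_[p] × ℤ_[p])
        = (w * w', w) - a • ((1 : ℤ_[p]), (0 : ℤ_[p])) - b • ((0 : ℤ_[p]), (1 : ℤ_[p])) := by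
      have h1 : (p ^ n : ℤ) • t = w * w' - (a : ℤ_[p]) := by
        rw [zsmul_eq_mul]; push_cast [ha]; linear_combination -ht
      have h2 : (p ^ n : ℤ) • s = w - (b : ℤ_[p]) := by
        rw [zsmul_eq_mul]; push_cast [hb]; linear_combination -hs
      ext
      · simpa using h1
      · simpa using h2
    have hymem : ((t, s) : ℤ_[p] × ℤ_[p]) ∈ bigG p w w' := by
      refine ⟨n, ?_⟩
      rw [hyy]
      exact sub_mem (sub_mem (Submodule.subset_span (by simp))
        (Submodule.smul_mem _ _ (Submodule.subset_span (by simp))))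
        (Submodule.smul_mem _ _ (Submodule.subset_span (by simp)))
    set Y : ↥(bigG p w w') := ⟨(t, s), hymem⟩ with hY
    have hYeq : (p ^ n : ℤ) • Y = gG p w w' - a • eG p w w' - b • fG p w w' :=
      Subtype.ext (by simpa [hY, eG, fG, gG] using hyy)
    have hF := congrArg F hYeq
    simp only [map_zsmul, map_sub] at hF
    refine ⟨F Y - t * F (eG p w w') - s * F (fG p w w'), ?_⟩
    rw [zsmul_eq_mul] at hF
    rw [zsmul_eq_mul, zsmul_eq_mul] at hF
    push_cast at hF
    rw [ha, hb] at hF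
    push_cast at hF
    linear_combination -hF - F (eG p w w') * ht - F (fG p w w') * hs
  have hz := eq_zero_of_forall_pow_dvd hdvd
  linear_combination hz

lemma memK_iff {x : ℤ_[p] × ℤ_[p]} :
    x ∈ Submodule.span ℤ ({((1 : ℤ_[p]), (0 : ℤ_[p]))} : Set (ℤ_[p] × ℤ_[p]))
      ↔ ∃ m : ℤ, x = ((m : ℤ_[p]), 0) := by
  rw [Submodule.mem_span_singleton]
  constructor
  · rintro ⟨m, rfl⟩
    exact ⟨m, by simp [Prod.smul_mk, zsmul_eq_mul]⟩
  · rintro ⟨m, rfl⟩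
    exact ⟨m, by simp [Prod.smul_mk, zsmul_eq_mul]⟩

lemma homToK (hind : AlgebraicIndependent ℤ ![w, w'])
    (f : ↥(bigG p w w') →+
      ↥(Submodule.span ℤ ({((1 : ℤ_[p]), (0 : ℤ_[p]))} : Set (ℤ_[p] × ℤ_[p])))) : f = 0 := by
  set F : ↥(bigG p w w') →+ ℤ_[p] :=
    AddMonoidHom.mk' (fun x => ((f x : ℤ_[p] × ℤ_[p])).1) (by intro a b; simp) with hF
  obtain ⟨m₁, hm₁⟩ := memK_iff.mp (f (eG p w w')).2
  obtain ⟨m₂, hm₂⟩ := memK_iff.mp (f (fG p w w')).2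
  obtain ⟨m₃, hm₃⟩ := memK_iff.mp (f (gG p w w')).2
  have hkey := keyA F
  have hFe : F (eG p w w') = (m₁ : ℤ_[p]) := by simp [hF, hm₁]
  have hFf : F (fG p w w') = (m₂ : ℤ_[p]) := by simp [hF, hm₂]
  have hFg : F (gG p w w') = (m₃ : ℤ_[p]) := by simp [hF, hm₃]
  rw [hFe, hFf, hFg] at hkey
  have h5 := indep5 hind (-m₃) m₂ 0 m₁ 0 (by push_cast; linear_combination -hkey)
  have hm₁0 : m₁ = 0 := h5.2.2.2.1
  have hm₂0 : m₂ = 0 := h5.2.1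
  have hm₃0 : m₃ = 0 := by have := h5.1; omega
  refine AddMonoidHom.ext fun x => ?_
  obtain ⟨m, hm⟩ := memK_iff.mp (f x).2
  have hF0 : F = 0 := by
    apply extB
    · simp [hF, hm₁, hm₁0]
    · simp [hF, hm₂, hm₂0]
    · simp [hF, hm₃, hm₃0]
  have : ((m : ℤ_[p])) = 0 := by
    have := congrArg (fun (G : ↥(bigG p w w') →+ ℤ_[p]) => G x) hF0
    simpa [hF, hm] using this
  have : (f x : ℤ_[p] × ℤ_[p]) = 0 := by rw [hm, this]; rfl
  rw [AddMonoidHom.zero_apply]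
  exact Subtype.ext (by simp [this])

lemma mem_K_of_snd_zero (hind : AlgebraicIndependent ℤ ![w, w'])
    (x : ↥(bigG p w w')) (hx2 : (x : ℤ_[p] × ℤ_[p]).2 = 0) :
    (x : ℤ_[p] × ℤ_[p]) ∈
      Submodule.span ℤ ({((1 : ℤ_[p]), (0 : ℤ_[p]))} : Set (ℤ_[p] × ℤ_[p])) := by
  obtain ⟨n, a, b, c, hx⟩ := memRepr x
  have hval : (p ^ n : ℤ) • (x : ℤ_[p] × ℤ_[p])
      = a • ((1 : ℤ_[p]), (0 : ℤ_[p])) + b • ((0 : ℤ_[p]), (1 : ℤ_[p])) + c • (w * w', w) :=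
    congrArg Subtype.val hx
  have h2 : (0 : ℤ_[p]) = (b : ℤ_[p]) + c * w := by
    have := congrArg Prod.snd hval
    simp only [Prod.smul_snd, Prod.snd_add, hx2, smul_zero] at this
    push_cast [zsmul_eq_mul] at this
    linear_combination this
  have h5 := indep5 hind b c 0 0 0 (by push_cast; linear_combination -h2)
  have hb : b = 0 := h5.1
  have hc : c = 0 := h5.2.1
  have h1 : ((p : ℤ_[p])) ^ n * (x : ℤ_[p] × ℤ_[p]).1 = (a : ℤ_[p]) := by
    have := congrArg Prod.fst hval
    simp only [Prod.smul_fst, Prod.fst_add] at this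
    push_cast [hb, hc, zero_smul, zsmul_eq_mul] at this
    linear_combination this
  obtain ⟨m, hm⟩ : (p : ℤ) ^ n ∣ a := int_dvd_of_padic_dvd ⟨(x : ℤ_[p] × ℤ_[p]).1, h1.symm⟩
  have hx1 : (x : ℤ_[p] × ℤ_[p]).1 = (m : ℤ_[p]) := by
    apply mul_left_cancel₀ (a := ((p : ℤ_[p])) ^ n) (by
      have := pn_ne_zero (p := p) n; push_cast at this ⊢; exact this)
    rw [h1, hm]; push_cast; ring
  exact memK_iff.mpr ⟨m, Prod.ext hx1 hx2⟩

noncomputable def pi2 (p : ℕ) [Fact p.Prime] (w w' : ℤ_[p]) : ↥(bigG p w w') →ₗ[ℤ] ℤ_[p] :=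
  (LinearMap.snd ℤ ℤ_[p] ℤ_[p]).comp (bigG p w w').subtype

lemma Kin_le_ker :
    (Submodule.span ℤ ({((1 : ℤ_[p]), (0 : ℤ_[p]))} : Set (ℤ_[p] × ℤ_[p]))).comap
      (bigG p w w').subtype ≤ LinearMap.ker (pi2 p w w') := by
  intro x hx
  rw [Submodule.mem_comap] at hx
  obtain ⟨m, hm⟩ := memK_iff.mp hx
  rw [LinearMap.mem_ker]
  show ((x : ℤ_[p] × ℤ_[p])).2 = 0
  rw [show ((bigG p w w').subtype x : ℤ_[p] × ℤ_[p]) = (x : ℤ_[p] × ℤ_[p]) from rfl] at hm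
  rw [hm]

noncomputable def theta (p : ℕ) [Fact p.Prime] (w w' : ℤ_[p]) :
    (↥(bigG p w w') ⧸ (Submodule.span ℤ ({((1 : ℤ_[p]), (0 : ℤ_[p]))} :
      Set (ℤ_[p] × ℤ_[p]))).comap (bigG p w w').subtype) →ₗ[ℤ] ℤ_[p] :=
  Submodule.liftQ _ (pi2 p w w') Kin_le_ker

lemma theta_mk (y : ↥(bigG p w w')) :
    theta p w w' (Submodule.mkQ _ y) = (y : ℤ_[p] × ℤ_[p]).2 := rfl

lemma theta_mk' (y : ↥(bigG p w w')) :
    theta p w w' (Submodule.Quotient.mk y) = (y : ℤ_[p] × ℤ_[p]).2 := rfl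

lemma theta_inj (hind : AlgebraicIndependent ℤ ![w, w']) :
    Function.Injective (theta p w w') := by
  rw [← LinearMap.ker_eq_bot]
  apply Submodule.ker_liftQ_eq_bot
  intro x hx
  rw [LinearMap.mem_ker] at hx
  exact Submodule.mem_comap.mpr (mem_K_of_snd_zero hind x hx)

set_option maxHeartbeats 1000000 in
lemma homToQuot (hind : AlgebraicIndependent ℤ ![w, w'])
    (f : ↥(bigG p w w') →+ (↥(bigG p w w') ⧸ (Submodule.span ℤ
      ({((1 : ℤ_[p]), (0 : ℤ_[p]))} : Set (ℤ_[p] × ℤ_[p]))).comap (bigG p w w').subtype)) :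
    ∃ m : ℤ, f = m • (Submodule.mkQ ((Submodule.span ℤ
      ({((1 : ℤ_[p]), (0 : ℤ_[p]))} : Set (ℤ_[p] × ℤ_[p]))).comap
      (bigG p w w').subtype)).toAddMonoidHom := by
  set F : ↥(bigG p w w') →+ ℤ_[p] := (theta p w w').toAddMonoidHom.comp f with hF
  have hH : ∀ x : ↥(bigG p w w'), ∃ (n : ℕ) (b c : ℤ),
      ((p : ℤ_[p])) ^ n * F x = (b : ℤ_[p]) + c * w := by
    intro x
    obtain ⟨y, hy⟩ := Submodule.mkQ_surjective _ (f x)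
    obtain ⟨n, a, b, c, hrep⟩ := memRepr y
    refine ⟨n, b, c, ?_⟩
    have hFx : F x = (y : ℤ_[p] × ℤ_[p]).2 := by
      rw [hF]; simp only [AddMonoidHom.coe_comp, Function.comp_apply,
        LinearMap.toAddMonoidHom_coe]
      rw [← hy, theta_mk]
    have hval := congrArg (fun z : ↥(bigG p w w') => ((z : ℤ_[p] × ℤ_[p])).2) hrep
    simp only [Submodule.coe_add, Submodule.coe_smul, Prod.smul_snd, Prod.snd_add] at hval
    rw [show ((eG p w w' : ℤ_[p] × ℤ_[p])).2 = 0 from rfl,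
      show ((fG p w w' : ℤ_[p] × ℤ_[p])).2 = 1 from rfl,
      show ((gG p w w' : ℤ_[p] × ℤ_[p])).2 = w from rfl] at hval
    rw [hFx]
    push_cast [zsmul_eq_mul] at hval
    linear_combination hval
  obtain ⟨n₁, b₁, c₁, h₁⟩ := hH (eG p w w')
  obtain ⟨n₂, b₂, c₂, h₂⟩ := hH (fG p w w')
  obtain ⟨n₃, b₃, c₃, h₃⟩ := hH (gG p w w')
  have hkey := keyA F
  have h5 := indep5 hind ((p : ℤ) ^ (n₁ + n₂) * b₃)
      ((p : ℤ) ^ (n₁ + n₂) * c₃ - (p : ℤ) ^ (n₁ + n₃) * b₂)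
      (-((p : ℤ) ^ (n₁ + n₃) * c₂)) (-((p : ℤ) ^ (n₂ + n₃) * b₁))
      (-((p : ℤ) ^ (n₂ + n₃) * c₁)) (by
    push_cast [pow_add]
    linear_combination - ((p : ℤ_[p])) ^ n₁ * ((p : ℤ_[p])) ^ n₂ * h₃
      + w * w' * ((p : ℤ_[p])) ^ n₂ * ((p : ℤ_[p])) ^ n₃ * h₁
      + w * ((p : ℤ_[p])) ^ n₁ * ((p : ℤ_[p])) ^ n₃ * h₂
      + ((p : ℤ_[p])) ^ n₁ * ((p : ℤ_[p])) ^ n₂ * ((p : ℤ_[p])) ^ n₃ * hkey)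
  have hpZ : ∀ k : ℕ, (p : ℤ) ^ k ≠ 0 :=
    fun k => pow_ne_zero _ (by exact_mod_cast (Fact.out : p.Prime).ne_zero)
  have hb₃ : b₃ = 0 := by have := h5.1; exact (mul_eq_zero.mp this).resolve_left (hpZ _)
  have hc₂ : c₂ = 0 := by
    have := h5.2.2.1; rw [neg_eq_zero] at this
    exact (mul_eq_zero.mp this).resolve_left (hpZ _)
  have hb₁ : b₁ = 0 := by
    have := h5.2.2.2.1; rw [neg_eq_zero] at this
    exact (mul_eq_zero.mp this).resolve_left (hpZ _)
  have hc₁ : c₁ = 0 := by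
    have := h5.2.2.2.2; rw [neg_eq_zero] at this
    exact (mul_eq_zero.mp this).resolve_left (hpZ _)
  have hFe : F (eG p w w') = 0 := by
    apply mul_left_cancel₀ (a := ((p : ℤ_[p])) ^ n₁) (by
      have := pn_ne_zero (p := p) n₁; push_cast at this ⊢; exact this)
    rw [h₁]; push_cast [hb₁, hc₁]; ring
  push_cast [hc₂, zero_mul, add_zero] at h₂
  obtain ⟨m, hm⟩ : (p : ℤ) ^ n₂ ∣ b₂ := by
    apply int_dvd_of_padic_dvd (n := n₂)
    exact ⟨F (fG p w w'), by linear_combination -h₂⟩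
  have hFf : F (fG p w w') = (m : ℤ_[p]) := by
    apply mul_left_cancel₀ (a := ((p : ℤ_[p])) ^ n₂) (by
      have := pn_ne_zero (p := p) n₂; push_cast at this ⊢; exact this)
    rw [h₂, hm]; push_cast; ring
  have hFg : F (gG p w w') = (m : ℤ_[p]) * w := by
    rw [hkey, hFe, hFf]; ring
  set G' : ↥(bigG p w w') →+ ℤ_[p] :=
    AddMonoidHom.mk' (fun x => (m : ℤ_[p]) * ((x : ℤ_[p] × ℤ_[p])).2)
      (by intro a b; simp [mul_add]) with hG'
  have hFG : F = G' := by
    apply extB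
    · rw [hFe, hG']; show (0 : ℤ_[p]) = (m : ℤ_[p]) * ((eG p w w' : ℤ_[p] × ℤ_[p])).2; simp [eG]
    · rw [hFf, hG']; show ((m : ℤ_[p])) = (m : ℤ_[p]) * ((fG p w w' : ℤ_[p] × ℤ_[p])).2; simp [fG]
    · rw [hFg, hG']; show ((m : ℤ_[p]) * w) = (m : ℤ_[p]) * ((gG p w w' : ℤ_[p] × ℤ_[p])).2
      simp [gG]
  refine ⟨m, AddMonoidHom.ext fun x => ?_⟩
  apply theta_inj hind
  have h1 : theta p w w' (f x) = F x := by
    rw [hF]; simp only [AddMonoidHom.coe_comp, Function.comp_apply,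
      LinearMap.toAddMonoidHom_coe]
  have h2 : theta p w w' ((m • (Submodule.mkQ ((Submodule.span ℤ
      ({((1 : ℤ_[p]), (0 : ℤ_[p]))} : Set (ℤ_[p] × ℤ_[p]))).comap
      (bigG p w w').subtype)).toAddMonoidHom) x)
      = (m : ℤ_[p]) * ((x : ℤ_[p] × ℤ_[p])).2 := by
    rw [AddMonoidHom.smul_apply]
    rw [show ((Submodule.mkQ _).toAddMonoidHom x) = Submodule.mkQ _ x from rfl]
    rw [map_zsmul, theta_mk, zsmul_eq_mul]
  rw [h1, h2, hFG, hG']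
  rfl

noncomputable def coeLM (p : ℕ) [Fact p.Prime] : ℤ_[p] →ₗ[ℤ] ℚ_[p] where
  toFun := fun x => (x : ℚ_[p])
  map_add' := fun a b => PadicInt.coe_add a b
  map_smul' := by
    intro m x
    simp only [RingHom.id_apply, zsmul_eq_mul]
    push_cast
    ring

noncomputable def jG (p : ℕ) [Fact p.Prime] (w w' : ℤ_[p]) :
    ↥(bigG p w w') →ₗ[ℤ] ℚ_[p] × ℚ_[p] :=
  (LinearMap.prodMap (coeLM p) (coeLM p)).comp (bigG p w w').subtype

lemma coe_eq_zero {x : ℤ_[p]} (h : (x : ℚ_[p]) = 0) : x = 0 := Subtype.ext h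

set_option maxHeartbeats 2000000 in
lemma rank_bigG (hind : AlgebraicIndependent ℤ ![w, w']) :
    Module.rank ℚ (ℚ ⊗[ℤ] ↥(bigG p w w')) = 3 := by
  classical
  set v : Fin 3 → ℚ ⊗[ℤ] ↥(bigG p w w') :=
    ![(1 : ℚ) ⊗ₜ[ℤ] eG p w w', (1 : ℚ) ⊗ₜ[ℤ] fG p w w', (1 : ℚ) ⊗ₜ[ℤ] gG p w w'] with hv
  set u : Fin 3 → ℚ_[p] × ℚ_[p] :=
    ![((1 : ℚ_[p]), (0 : ℚ_[p])), ((0 : ℚ_[p]), (1 : ℚ_[p])),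
      (((w : ℚ_[p]) * (w' : ℚ_[p])), (w : ℚ_[p]))] with hu
  have huZ : LinearIndependent ℤ u := by
    rw [Fintype.linearIndependent_iff]
    intro g hg
    rw [Fin.sum_univ_three] at hg
    have h1 := congrArg Prod.fst hg
    have h2 := congrArg Prod.snd hg
    simp only [hu, Matrix.cons_val_zero, Matrix.cons_val_one, Matrix.head_cons,
      Matrix.cons_val_two, Matrix.tail_cons, Prod.fst_add, Prod.snd_add,
      Prod.smul_fst, Prod.smul_snd, Prod.fst_zero, Prod.snd_zero, smul_zero] at h1 h2
    have h1' : ((g 0 + g 2 * (w * w') : ℤ_[p]) : ℚ_[p]) = 0 := by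
      push_cast [zsmul_eq_mul] at h1 ⊢
      linear_combination h1
    have h2' : ((g 1 + g 2 * w : ℤ_[p]) : ℚ_[p]) = 0 := by
      push_cast [zsmul_eq_mul] at h2 ⊢
      linear_combination h2
    have e1 := indep5 hind (g 0) 0 0 (g 2) 0 (by
      push_cast
      linear_combination coe_eq_zero h1')
    have e2 := indep5 hind (g 1) (g 2) 0 0 0 (by
      push_cast
      linear_combination coe_eq_zero h2')
    intro i
    fin_cases i
    · exact e1.1
    · exact e2.1
    · exact e1.2.2.2.1
  have huQ : LinearIndependent ℚ u := (LinearIndependent.iff_fractionRing ℤ ℚ).mp huZ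
  have hcomp : (⇑(LinearMap.liftBaseChange ℚ (jG p w w')) ∘ v) = u := by
    funext i
    fin_cases i <;>
      simp [hv, hu, jG, coeLM, LinearMap.liftBaseChange_tmul, eG, fG, gG]
  have hliv : LinearIndependent ℚ v :=
    LinearIndependent.of_comp (LinearMap.liftBaseChange ℚ (jG p w w')) (hcomp ▸ huQ)
  have hp0 : ∀ n : ℕ, ((p : ℚ)) ^ n ≠ 0 := fun n =>
    pow_ne_zero _ (Nat.cast_ne_zero.mpr (Fact.out : p.Prime).ne_zero)
  have hsp : ⊤ ≤ Submodule.span ℚ (Set.range v) := by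
    rintro z -
    induction z using TensorProduct.induction_on with
    | zero => exact Submodule.zero_mem _
    | tmul q x =>
      have h1x : (1 : ℚ) ⊗ₜ[ℤ] x ∈ Submodule.span ℚ (Set.range v) := by
        obtain ⟨n, a, b, c, hx⟩ := memRepr x
        have hEq : ((p : ℚ)) ^ n • ((1 : ℚ) ⊗ₜ[ℤ] x)
            = (a : ℚ) • v 0 + (b : ℚ) • v 1 + (c : ℚ) • v 2 := by
          have step : ((p : ℚ)) ^ n • ((1 : ℚ) ⊗ₜ[ℤ] x) = (1 : ℚ) ⊗ₜ[ℤ] ((p ^ n : ℤ) • x) := by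
            rw [TensorProduct.tmul_smul, ← Int.cast_smul_eq_zsmul ℚ]
            norm_num
          rw [step, hx]
          simp only [hv, Matrix.cons_val_zero, Matrix.cons_val_one, Matrix.head_cons,
            Matrix.cons_val_two, Matrix.tail_cons]
          rw [TensorProduct.tmul_add, TensorProduct.tmul_add]
          rw [TensorProduct.tmul_smul, TensorProduct.tmul_smul, TensorProduct.tmul_smul]
          rw [← Int.cast_smul_eq_zsmul ℚ, ← Int.cast_smul_eq_zsmul ℚ, ← Int.cast_smul_eq_zsmul ℚ]
        have hmem : (a : ℚ) • v 0 + (b : ℚ) • v 1 + (c : ℚ) • v 2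
            ∈ Submodule.span ℚ (Set.range v) := by
          refine Submodule.add_mem _ (Submodule.add_mem _ ?_ ?_) ?_ <;>
            exact Submodule.smul_mem _ _ (Submodule.subset_span ⟨_, rfl⟩)
        have := Submodule.smul_mem _ ((((p : ℚ)) ^ n)⁻¹) hmem
        rwa [← hEq, inv_smul_smul₀ (hp0 n)] at this
      have hqx : q ⊗ₜ[ℤ] x = q • ((1 : ℚ) ⊗ₜ[ℤ] x) := by
        rw [TensorProduct.smul_tmul', smul_eq_mul, mul_one]
      rw [hqx]
      exact Submodule.smul_mem _ _ h1x
    | add s t hs ht => exact Submodule.add_mem _ hs ht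
  have B := Module.Basis.mk hliv hsp
  rw [rank_eq_card_basis B]
  simp

set_option maxHeartbeats 2000000 in
lemma rank_quot (hind : AlgebraicIndependent ℤ ![w, w']) :
    Module.rank ℚ (ℚ ⊗[ℤ] (↥(bigG p w w') ⧸ (Submodule.span ℤ
      ({((1 : ℤ_[p]), (0 : ℤ_[p]))} : Set (ℤ_[p] × ℤ_[p]))).comap
      (bigG p w w').subtype)) = 2 := by
  classical
  set Q := ↥(bigG p w w') ⧸ (Submodule.span ℤ
      ({((1 : ℤ_[p]), (0 : ℤ_[p]))} : Set (ℤ_[p] × ℤ_[p]))).comap (bigG p w w').subtype with hQ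
  set mk := Submodule.mkQ ((Submodule.span ℤ
      ({((1 : ℤ_[p]), (0 : ℤ_[p]))} : Set (ℤ_[p] × ℤ_[p]))).comap (bigG p w w').subtype) with hmk
  set jq : Q →ₗ[ℤ] ℚ_[p] := (coeLM p).comp (theta p w w') with hjq
  set v : Fin 2 → ℚ ⊗[ℤ] Q :=
    ![(1 : ℚ) ⊗ₜ[ℤ] mk (fG p w w'), (1 : ℚ) ⊗ₜ[ℤ] mk (gG p w w')] with hv
  set u : Fin 2 → ℚ_[p] := ![(1 : ℚ_[p]), (w : ℚ_[p])] with hu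
  have huZ : LinearIndependent ℤ u := by
    rw [Fintype.linearIndependent_iff]
    intro g hg
    rw [Fin.sum_univ_two] at hg
    simp only [hu, Matrix.cons_val_zero, Matrix.cons_val_one, Matrix.head_cons] at hg
    have h1' : ((g 0 + g 1 * w : ℤ_[p]) : ℚ_[p]) = 0 := by
      push_cast [zsmul_eq_mul] at hg ⊢
      linear_combination hg
    have e1 := indep5 hind (g 0) (g 1) 0 0 0 (by
      push_cast
      linear_combination coe_eq_zero h1')
    intro i
    fin_cases i
    · exact e1.1
    · exact e1.2.1
  have huQ : LinearIndependent ℚ u := (LinearIndependent.iff_fractionRing ℤ ℚ).mp huZ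
  have hcomp : (⇑(LinearMap.liftBaseChange ℚ jq) ∘ v) = u := by
    funext i
    fin_cases i
    · show (LinearMap.liftBaseChange ℚ jq) ((1 : ℚ) ⊗ₜ[ℤ] mk (fG p w w')) = (1 : ℚ_[p])
      rw [LinearMap.liftBaseChange_tmul, one_smul]
      rfl
    · show (LinearMap.liftBaseChange ℚ jq) ((1 : ℚ) ⊗ₜ[ℤ] mk (gG p w w')) = (w : ℚ_[p])
      rw [LinearMap.liftBaseChange_tmul, one_smul]
      rfl
  have hliv : LinearIndependent ℚ v :=
    LinearIndependent.of_comp (LinearMap.liftBaseChange ℚ jq) (hcomp ▸ huQ)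
  have hp0 : ∀ n : ℕ, ((p : ℚ)) ^ n ≠ 0 := fun n =>
    pow_ne_zero _ (Nat.cast_ne_zero.mpr (Fact.out : p.Prime).ne_zero)
  have heK : mk (eG p w w') = 0 := by
    rw [hmk, Submodule.mkQ_apply, Submodule.Quotient.mk_eq_zero]
    exact Submodule.mem_comap.mpr (Submodule.mem_span_singleton_self _)
  have hsp : ⊤ ≤ Submodule.span ℚ (Set.range v) := by
    rintro z -
    induction z using TensorProduct.induction_on with
    | zero => exact Submodule.zero_mem _
    | tmul q y =>
      have h1x : (1 : ℚ) ⊗ₜ[ℤ] y ∈ Submodule.span ℚ (Set.range v) := by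
        obtain ⟨x, rfl⟩ := Submodule.mkQ_surjective _ y
        obtain ⟨n, a, b, c, hx⟩ := memRepr x
        have hxq : (p ^ n : ℤ) • mk x = b • mk (fG p w w') + c • mk (gG p w w') := by
          have := congrArg mk hx
          simp only [map_zsmul, map_add] at this
          rw [heK, smul_zero, zero_add] at this
          exact this
        have hEq : ((p : ℚ)) ^ n • ((1 : ℚ) ⊗ₜ[ℤ] mk x)
            = (b : ℚ) • v 0 + (c : ℚ) • v 1 := by
          have step : ((p : ℚ)) ^ n • ((1 : ℚ) ⊗ₜ[ℤ] mk x)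
              = (1 : ℚ) ⊗ₜ[ℤ] ((p ^ n : ℤ) • mk x) := by
            rw [TensorProduct.tmul_smul, ← Int.cast_smul_eq_zsmul ℚ]
            norm_num
          rw [step, hxq]
          simp only [hv, Matrix.cons_val_zero, Matrix.cons_val_one, Matrix.head_cons]
          rw [TensorProduct.tmul_add]
          rw [TensorProduct.tmul_smul, TensorProduct.tmul_smul]
          rw [← Int.cast_smul_eq_zsmul ℚ, ← Int.cast_smul_eq_zsmul ℚ]
        have hmem : (b : ℚ) • v 0 + (c : ℚ) • v 1 ∈ Submodule.span ℚ (Set.range v) := by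
          refine Submodule.add_mem _ ?_ ?_ <;>
            exact Submodule.smul_mem _ _ (Submodule.subset_span ⟨_, rfl⟩)
        have := Submodule.smul_mem _ ((((p : ℚ)) ^ n)⁻¹) hmem
        rwa [← hEq, inv_smul_smul₀ (hp0 n)] at this
      have hqx : q ⊗ₜ[ℤ] y = q • ((1 : ℚ) ⊗ₜ[ℤ] y) := by
        rw [TensorProduct.smul_tmul', smul_eq_mul, mul_one]
      rw [hqx]
      exact Submodule.smul_mem _ _ h1x
    | add s t hs ht => exact Submodule.add_mem _ hs ht
  have B := Module.Basis.mk hliv hsp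
  rw [rank_eq_card_basis B]
  simp

end Stmt7Aux

open Stmt7Aux in
set_option maxHeartbeats 2000000 in
/-- For `w, w' ∈ ℤ_p` algebraically independent over `ℤ`, with
`G = ⟨(1,0), (0,1), (ww', w)⟩_*` and `K = ℤ·(1,0)`:  `Hom(G,K) = 0`, every group homomorphism
`G → G/K` is an integer multiple of the canonical projection `π`; in particular
`0 → K → G → G/K → 0` is a cellular exact sequence of abelian groups, `K` is infinite cyclic,
`G` has rank `3` and `G/K` has rank `2`. -/
theorem stmt7 (p : ℕ) [Fact p.Prime] (w w' : ℤ_[p])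
    (hind : AlgebraicIndependent ℤ ![w, w']) :
    ∀ (K : Submodule ℤ (ℤ_[p] × ℤ_[p])),
      K = Submodule.span ℤ ({((1 : ℤ_[p]), (0 : ℤ_[p]))} : Set (ℤ_[p] × ℤ_[p])) →
      ∀ (Kin : Submodule ℤ ↥(bigG p w w')), Kin = K.comap (bigG p w w').subtype →
      (∀ f : ↥(bigG p w w') →+ ↥K, f = 0) ∧
      (∀ f : ↥(bigG p w w') →+ (↥(bigG p w w') ⧸ Kin),
          ∃ n : ℤ, f = n • Kin.mkQ.toAddMonoidHom) ∧
      Function.Surjective Kin.mkQ.toAddMonoidHom ∧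
      IsCellularCoverAb Kin.mkQ.toAddMonoidHom ∧
      Nonempty (↥K ≃+ ℤ) ∧
      Module.rank ℚ (ℚ ⊗[ℤ] ↥(bigG p w w')) = 3 ∧
      Module.rank ℚ (ℚ ⊗[ℤ] (↥(bigG p w w') ⧸ Kin)) = 2 := by
  intro K hK Kin hKin
  subst hK
  subst hKin
  have part1 : ∀ f : ↥(bigG p w w') →+
      ↥(Submodule.span ℤ ({((1 : ℤ_[p]), (0 : ℤ_[p]))} : Set (ℤ_[p] × ℤ_[p]))), f = 0 :=
    fun f => homToK hind f
  have part2 := fun f => homToQuot (p := p) hind f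
  refine ⟨part1, part2, ?_, ⟨?_, ?_⟩, ?_, rank_bigG hind, rank_quot hind⟩
  · -- surjectivity of mkQ
    intro y
    obtain ⟨x, hx⟩ := Submodule.mkQ_surjective _ y
    exact ⟨x, hx⟩
  · -- injectivity of π_*
    intro φ₁ φ₂ h
    have hmem : ∀ x : ↥(bigG p w w'), ((φ₁ x - φ₂ x : ↥(bigG p w w')) : ℤ_[p] × ℤ_[p]) ∈
        Submodule.span ℤ ({((1 : ℤ_[p]), (0 : ℤ_[p]))} : Set (ℤ_[p] × ℤ_[p])) := by
      intro x
      have hx : Submodule.mkQ _ (φ₁ x) = Submodule.mkQ _ (φ₂ x) := DFunLike.congr_fun h x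
      have h0 : Submodule.mkQ ((Submodule.span ℤ ({((1 : ℤ_[p]), (0 : ℤ_[p]))} :
          Set (ℤ_[p] × ℤ_[p]))).comap (bigG p w w').subtype) (φ₁ x - φ₂ x) = 0 := by
        rw [map_sub, hx, sub_self]
      rw [Submodule.mkQ_apply, Submodule.Quotient.mk_eq_zero] at h0
      exact Submodule.mem_comap.mp h0
    set ψK : ↥(bigG p w w') →+
        ↥(Submodule.span ℤ ({((1 : ℤ_[p]), (0 : ℤ_[p]))} : Set (ℤ_[p] × ℤ_[p]))) :=
      AddMonoidHom.mk' (fun x => ⟨((φ₁ x - φ₂ x : ↥(bigG p w w')) : ℤ_[p] × ℤ_[p]), hmem x⟩)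
        (by
          intro a b
          apply Subtype.ext
          simp only [map_add, Submodule.coe_add, AddSubgroupClass.coe_sub]
          abel) with hψK
    have hψ0 := part1 ψK
    refine AddMonoidHom.ext fun x => ?_
    have h0 : ψK x = 0 := by rw [hψ0]; rfl
    have h1 : ((φ₁ x - φ₂ x : ↥(bigG p w w')) : ℤ_[p] × ℤ_[p]) = 0 := congrArg Subtype.val h0
    exact sub_eq_zero.mp (Subtype.ext h1)
  · -- surjectivity of π_*
    intro ψ
    obtain ⟨m, hm⟩ := part2 ψ
    refine ⟨m • AddMonoidHom.id _, ?_⟩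
    rw [hm]
    refine AddMonoidHom.ext fun x => ?_
    simp only [AddMonoidHom.comp_apply, AddMonoidHom.smul_apply, AddMonoidHom.id_apply]
    exact map_zsmul (Submodule.mkQ _).toAddMonoidHom m x
  · -- K ≃+ ℤ
    set k0 : ↥(Submodule.span ℤ ({((1 : ℤ_[p]), (0 : ℤ_[p]))} : Set (ℤ_[p] × ℤ_[p]))) :=
      ⟨((1 : ℤ_[p]), (0 : ℤ_[p])), Submodule.mem_span_singleton_self _⟩ with hk0
    have hbij : Function.Bijective (zmultiplesHom _ k0) := by
      constructor
      · intro m n hmn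
        have h1 : m • k0 = n • k0 := hmn
        have h2 := congrArg (fun z : ↥(Submodule.span ℤ
            ({((1 : ℤ_[p]), (0 : ℤ_[p]))} : Set (ℤ_[p] × ℤ_[p]))) =>
            ((z : ℤ_[p] × ℤ_[p])).1) h1
        simp only [hk0, SetLike.val_smul, Prod.smul_fst] at h2
        rw [zsmul_eq_mul, zsmul_eq_mul, mul_one, mul_one] at h2
        exact_mod_cast h2
      · intro y
        obtain ⟨m, hm⟩ := memK_iff.mp y.2
        refine ⟨m, Subtype.ext ?_⟩
        show ((m • k0 : ↥(Submodule.span ℤ ({((1 : ℤ_[p]), (0 : ℤ_[p]))} :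
          Set (ℤ_[p] × ℤ_[p])))) : ℤ_[p] × ℤ_[p]) = (y : ℤ_[p] × ℤ_[p])
        rw [hm]
        simp [hk0, Prod.smul_mk, zsmul_eq_mul]
    exact ⟨(AddEquiv.ofBijective _ hbij).symm⟩
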